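/- For j,k ∈ {0,…,6} with k − j ≡ 2 (mod 7) or k − j ≡ 5 (mod 7), the sets A_j and A_k are disjoint: A_j ∩ A_k = ∅. (Thus, apart from the diagonals shared by consecutive A's, A_k meets only A_{k+3} and A_{k+4}.) -/

import Mathlib

open Complex

/-- `zeta t = exp(2πit/7)`. -/
noncomputable def zeta (t : ℝ) : ℂ := Complex.exp ((2 * Real.pi * t / 7 : ℝ) * Complex.I)

/-- The 3-sphere as the unit sphere in `ℂ × ℂ`. -/
def Sph3 : Set (ℂ × ℂ) := {p | ‖p.1‖ ^ 2 + ‖p.2‖ ^ 2 = 1}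

/-- The "diagonal" 3-sphere `Δ_k = {((x₁,x₂),(ζᵏx₁,ζ^{2k}x₂))} ⊆ S³ × S³`. -/
def Delta (k : ℕ) : Set ((ℂ × ℂ) × (ℂ × ℂ)) :=
  {q | ∃ p ∈ Sph3, q = (p, (zeta k * p.1, zeta (2 * k) * p.2))}

/-- `A_k = {((x₁,x₂),(ζˢx₁,ζ^{2s}x₂)) : (x₁,x₂) ∈ S³, s ∈ [k−1,k]} ⊆ S³ × S³`. -/
def A (k : ℕ) : Set ((ℂ × ℂ) × (ℂ × ℂ)) :=
  {q | ∃ p ∈ Sph3, ∃ s : ℝ, (k : ℝ) - 1 ≤ s ∧ s ≤ k ∧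
    q = (p, (zeta s * p.1, zeta (2 * s) * p.2))}

lemma zeta_eq (a b : ℝ) (h : zeta a = zeta b) : ∃ n : ℤ, a = b + 7 * n := by
  rw [zeta, zeta, Complex.exp_eq_exp_iff_exists_int] at h
  obtain ⟨n, hn⟩ := h
  refine ⟨n, ?_⟩
  have him := congrArg Complex.im hn
  simp at him
  have hπ : (2 * Real.pi / 7 : ℝ) ≠ 0 := by positivity
  have h0 : 2 * Real.pi / 7 * (a - (b + 7 * n)) = 0 := by
    field_simp at him ⊢
    simp [him]
  rcases mul_eq_zero.mp h0 with h1 | h1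
  · exact absurd h1 hπ
  · linarith

/-- For `j,k ∈ {0,…,6}` with `k − j ≡ 2 (mod 7)` or `k − j ≡ 5 (mod 7)`, the sets
`A_j` and `A_k` are disjoint.  (Thus, apart from the diagonals shared by consecutive
`A`'s, `A_k` meets only `A_{k+3}` and `A_{k+4}`.) -/
theorem stmt_10 (j k : ℕ) (hj : j ≤ 6) (hk : k ≤ 6)
    (h : (k : ZMod 7) - (j : ZMod 7) = 2 ∨ (k : ZMod 7) - (j : ZMod 7) = 5) :
    A j ∩ A k = ∅ := by
  ext q
  simp only [Set.mem_inter_iff, Set.mem_empty_iff_false, iff_false, not_and]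
  rintro ⟨p, hp, s, hs1, hs2, hq1⟩ ⟨p', hp', t, ht1, ht2, hq2⟩
  rw [hq1] at hq2
  obtain ⟨hpp, hsnd⟩ := Prod.mk.inj hq2
  subst hpp
  obtain ⟨h1, h2⟩ := Prod.mk.inj hsnd
  -- p ≠ 0 in at least one coordinate
  have hpne : p.1 ≠ 0 ∨ p.2 ≠ 0 := by
    by_contra hcon
    push_neg at hcon
    simp only [Sph3, Set.mem_setOf_eq, hcon.1, hcon.2, map_zero] at hp
    norm_num at hp
  -- get integer n with 2s = 2t + 7n
  obtain ⟨n, hn⟩ : ∃ n : ℤ, 2 * s = 2 * t + 7 * n := by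
    rcases hpne with hx | hx
    · have hz : zeta s = zeta t := mul_right_cancel₀ hx h1
      obtain ⟨m, hm⟩ := zeta_eq s t hz
      exact ⟨2 * m, by push_cast; linarith⟩
    · have hz : zeta (2 * s) = zeta (2 * t) := mul_right_cancel₀ hx h2
      obtain ⟨m, hm⟩ := zeta_eq (2 * s) (2 * t) hz
      exact ⟨m, by linarith⟩
  -- bounds in ℤ
  have hA : (2 * (j : ℤ) - 2 * (k : ℤ) - 2) ≤ 7 * n := by
    have : (2 * (j : ℝ) - 2 * (k : ℝ) - 2) ≤ 7 * (n : ℝ) := by linarith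
    exact_mod_cast this
  have hB : 7 * n ≤ 2 * (j : ℤ) - 2 * (k : ℤ) + 2 := by
    have : 7 * (n : ℝ) ≤ 2 * (j : ℝ) - 2 * (k : ℝ) + 2 := by linarith
    exact_mod_cast this
  have hj' : (j : ℤ) ≤ 6 := by exact_mod_cast hj
  have hk' : (k : ℤ) ≤ 6 := by exact_mod_cast hk
  have hj0 : (0 : ℤ) ≤ j := Int.ofNat_nonneg j
  have hk0 : (0 : ℤ) ≤ k := Int.ofNat_nonneg k
  have hmod : ((k : ℤ) - (j : ℤ)) % 7 = 2 % 7 ∨ ((k : ℤ) - (j : ℤ)) % 7 = 5 % 7 := by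
    rcases h with h | h
    · left
      refine (ZMod.intCast_eq_intCast_iff' _ _ _).mp ?_
      push_cast
      exact h
    · right
      refine (ZMod.intCast_eq_intCast_iff' _ _ _).mp ?_
      push_cast
      exact h
  omega
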